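/- Let z ∈ ℝ², h > 0, and let u : ℝ² → ℝ be four times continuously differentiable on an open set containing the closed ball of radius 2h centered at z. Let M ≥ 0 be such that the operator norm of the fourth derivative of u is bounded by M on that closed ball. Write u_j = u(z_j) with z₀ = z, z₁ = z+(h,0), z₂ = z+(h,h), z₃ = z+(0,h), z₄ = z−(h,0), z₅ = z−(h,h), z₆ = z−(0,h). Then the recovered mixed-derivative stencil is second-order consistent: | (2u₀ − u₁ + u₂ − u₃ − u₄ + u₅ − u₆) / (2h²) − ∂²u/∂x∂y (z) | ≤ (1/4) M h². -/

import Mathlib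

open Metric

section Aux

variable {E : Type*} [NormedAddCommGroup E] [NormedSpace ℝ E]

lemma hasDerivAt_line_iteratedFDeriv {u : E → ℝ} {s : Set E} (hs : IsOpen s)
    (hu : ContDiffOn ℝ 4 u s) {n : ℕ} (hn : n + 1 ≤ 4) (z v : E) {t : ℝ}
    (ht : z + t • v ∈ s) :
    HasDerivAt (fun τ : ℝ => iteratedFDeriv ℝ n u (z + τ • v) (fun _ => v))
      (iteratedFDeriv ℝ (n + 1) u (z + t • v) (fun _ => v)) t := by
  have hdiff : DifferentiableAt ℝ (iteratedFDeriv ℝ n u) (z + t • v) := by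
    have h1 : DifferentiableOn ℝ (iteratedFDerivWithin ℝ n u s) s :=
      hu.differentiableOn_iteratedFDerivWithin
        (by exact_mod_cast Nat.lt_of_succ_le hn) hs.uniqueDiffOn
    have h2 : DifferentiableWithinAt ℝ (iteratedFDeriv ℝ n u) s (z + t • v) :=
      (h1 _ ht).congr (fun x hx => (iteratedFDerivWithin_of_isOpen n hs hx).symm)
        (iteratedFDerivWithin_of_isOpen n hs ht).symm
    exact h2.differentiableAt (hs.mem_nhds ht)
  have hline : HasDerivAt (fun τ : ℝ => z + τ • v) v t := by
    simpa using ((hasDerivAt_id t).smul_const v).const_add z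
  have hcomp := hdiff.hasFDerivAt.comp_hasDerivAt t hline
  have happ := ((ContinuousMultilinearMap.apply ℝ (fun _ : Fin n => E) ℝ
      (fun _ => v)).hasFDerivAt.comp_hasDerivAt t hcomp)
  have hkey : iteratedFDeriv ℝ (n + 1) u (z + t • v) (fun _ => v) =
      fderiv ℝ (iteratedFDeriv ℝ n u) (z + t • v) v (fun _ => v) :=
    iteratedFDeriv_succ_apply_left _
  rw [hkey]
  exact happ

end Aux

section Aux2

variable {E : Type*} [NormedAddCommGroup E] [NormedSpace ℝ E]

lemma iteratedDerivWithin_line {u : E → ℝ} {s : Set E} (hs : IsOpen s)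
    (hu : ContDiffOn ℝ 4 u s) (z v : E)
    (hmaps : ∀ t ∈ Set.Icc (0:ℝ) 1, z + t • v ∈ s) {n : ℕ} (hn : n ≤ 4) :
    ∀ t ∈ Set.Icc (0:ℝ) 1,
      iteratedDerivWithin n (fun τ => u (z + τ • v)) (Set.Icc 0 1) t
        = iteratedFDeriv ℝ n u (z + t • v) (fun _ => v) := by
  induction n with
  | zero => intro t ht; simp
  | succ n IH =>
    intro t ht
    have hIH := IH (Nat.le_of_succ_le hn)
    have hd : HasDerivWithinAt
        (iteratedDerivWithin n (fun τ => u (z + τ • v)) (Set.Icc 0 1))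
        (iteratedFDeriv ℝ (n + 1) u (z + t • v) (fun _ => v)) (Set.Icc 0 1) t :=
      ((hasDerivAt_line_iteratedFDeriv hs hu hn z v
        (hmaps t ht)).hasDerivWithinAt).congr (fun y hy => hIH y hy) (hIH t ht)
    rw [iteratedDerivWithin_succ]
    exact hd.derivWithin ((uniqueDiffOn_Icc one_pos) t ht)

lemma taylor_four_bound {u : E → ℝ} {s : Set E} (hs : IsOpen s)
    (hu : ContDiffOn ℝ 4 u s) {z : E} {r M : ℝ} (hM : 0 ≤ M)
    (hball : closedBall z r ⊆ s)
    (hbound : ∀ x ∈ closedBall z r, ‖iteratedFDeriv ℝ 4 u x‖ ≤ M)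
    {v : E} (hv : ‖v‖ ≤ r) :
    |u (z + v) - u z - fderiv ℝ u z v - (1/2) * fderiv ℝ (fderiv ℝ u) z v v
      - (1/6) * iteratedFDeriv ℝ 3 u z (fun _ => v)| ≤ M * ‖v‖ ^ 4 / 24 := by
  have hmem : ∀ t ∈ Set.Icc (0:ℝ) 1, z + t • v ∈ closedBall z r := by
    intro t ht
    rw [mem_closedBall, dist_eq_norm]
    have h1 : z + t • v - z = t • v := by abel
    rw [h1, norm_smul]
    calc ‖t‖ * ‖v‖ ≤ 1 * ‖v‖ := by
          apply mul_le_mul_of_nonneg _ le_rfl (norm_nonneg _) (norm_nonneg _)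
          rw [Real.norm_eq_abs, abs_le]; exact ⟨by linarith [ht.1], ht.2⟩
      _ = ‖v‖ := one_mul _
      _ ≤ r := hv
  have hmaps : ∀ t ∈ Set.Icc (0:ℝ) 1, z + t • v ∈ s := fun t ht => hball (hmem t ht)
  have hline : ContDiff ℝ 4 (fun τ : ℝ => z + τ • v) :=
    contDiff_const.add (contDiff_id.smul contDiff_const)
  have hφ : ContDiffOn ℝ 4 (fun τ : ℝ => u (z + τ • v)) (Set.Icc 0 1) :=
    ContDiffOn.comp hu hline.contDiffOn hmaps
  have hder : ∀ (n : ℕ), n ≤ 4 → ∀ t ∈ Set.Icc (0:ℝ) 1,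
      iteratedDerivWithin n (fun τ => u (z + τ • v)) (Set.Icc 0 1) t
        = iteratedFDeriv ℝ n u (z + t • v) (fun _ => v) :=
    fun n hn => iteratedDerivWithin_line hs hu z v hmaps hn
  have hf' : DifferentiableOn ℝ
      (iteratedDerivWithin 3 (fun τ : ℝ => u (z + τ • v)) (Set.Icc 0 1))
      (Set.Ioo 0 1) := by
    intro t ht
    have h1 := (hasDerivAt_line_iteratedFDeriv (n := 3) hs hu (by norm_num) z v
      (hmaps t (Set.Ioo_subset_Icc_self ht))).differentiableAt
    exact h1.differentiableWithinAt.congr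
      (fun y hy => hder 3 (by norm_num) y (Set.Ioo_subset_Icc_self hy))
      (hder 3 (by norm_num) t (Set.Ioo_subset_Icc_self ht))
  have hI : Set.uIcc (0:ℝ) 1 = Set.Icc 0 1 := Set.uIcc_of_le zero_le_one
  have hO : Set.uIoo (0:ℝ) 1 = Set.Ioo 0 1 := Set.uIoo_of_le zero_le_one
  obtain ⟨x', hx', hlag⟩ := taylor_mean_remainder_lagrange (f := fun τ : ℝ => u (z + τ • v))
    (n := 3) (x₀ := 0) (x := 1) one_pos.ne (by rw [hI]; exact hφ.of_le (by norm_num))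
    (by rw [hI, hO]; exact hf')
  rw [hO] at hx'
  rw [hI] at hlag
  have hx'I : x' ∈ Set.Icc (0:ℝ) 1 := ⟨hx'.1.le, hx'.2.le⟩
  have hT : taylorWithinEval (fun τ : ℝ => u (z + τ • v)) 3 (Set.Icc 0 1) 0 1
      = u z + fderiv ℝ u z v + (1/2) * fderiv ℝ (fderiv ℝ u) z v v
        + (1/6) * iteratedFDeriv ℝ 3 u z (fun _ => v) := by
    rw [taylor_within_apply]
    have h0 : ∀ k, k ≤ 4 → iteratedDerivWithin k (fun τ : ℝ => u (z + τ • v))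
        (Set.Icc 0 1) 0 = iteratedFDeriv ℝ k u z (fun _ => v) := by
      intro k hk
      have := hder k hk 0 (by norm_num)
      simpa using this
    rw [Finset.sum_range_succ, Finset.sum_range_succ, Finset.sum_range_succ,
      Finset.sum_range_one]
    rw [h0 0 (by norm_num), h0 1 (by norm_num), h0 2 (by norm_num), h0 3 (by norm_num)]
    rw [iteratedFDeriv_zero_apply, iteratedFDeriv_one_apply, iteratedFDeriv_two_apply]
    norm_num [Nat.factorial]
  have h4 : iteratedDerivWithin 4 (fun τ : ℝ => u (z + τ • v)) (Set.Icc 0 1) x'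
      = iteratedFDeriv ℝ 4 u (z + x' • v) (fun _ => v) := hder 4 le_rfl x' hx'I
  have hb : |iteratedFDeriv ℝ 4 u (z + x' • v) (fun _ => v)| ≤ M * ‖v‖ ^ 4 := by
    have h5 := (iteratedFDeriv ℝ 4 u (z + x' • v)).le_opNorm (fun _ => v)
    have h6 : (∏ _i : Fin 4, ‖v‖) = ‖v‖ ^ 4 := by
      simp [Finset.prod_const]
    rw [h6] at h5
    rw [← Real.norm_eq_abs]
    exact h5.trans (mul_le_mul_of_nonneg_right (hbound _ (hmem x' hx'I))
      (by positivity))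
  have heq : u (z + v) - u z - fderiv ℝ u z v - (1/2) * fderiv ℝ (fderiv ℝ u) z v v
      - (1/6) * iteratedFDeriv ℝ 3 u z (fun _ => v)
      = (fun τ : ℝ => u (z + τ • v)) 1
        - taylorWithinEval (fun τ : ℝ => u (z + τ • v)) 3 (Set.Icc 0 1) 0 1 := by
    rw [hT]; simp only [one_smul]; ring
  rw [heq, hlag, h4, abs_div, abs_mul]
  norm_num [Nat.factorial]
  gcongr

end Aux2

/-- The first standard basis vector of `ℝ²`. -/
noncomputable def e1 : EuclideanSpace ℝ (Fin 2) := EuclideanSpace.single 0 1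

/-- The second standard basis vector of `ℝ²`. -/
noncomputable def e2 : EuclideanSpace ℝ (Fin 2) := EuclideanSpace.single 1 1

set_option maxHeartbeats 1000000 in
/-- **Second-order consistency of the recovered mixed-derivative stencil.** With the
seven sampling points `z₀ = z`, `z₁ = z+(h,0)`, `z₂ = z+(h,h)`, `z₃ = z+(0,h)`,
`z₄ = z−(h,0)`, `z₅ = z−(h,h)`, `z₆ = z−(0,h)` and `u_j = u(z_j)`, if `u` is `C⁴` on an
open set containing the closed ball of radius `2h` around `z` with fourth derivative
bounded in operator norm by `M` there, then
`|(2u₀ − u₁ + u₂ − u₃ − u₄ + u₅ − u₆)/(2h²) − ∂²u/∂x∂y(z)| ≤ (1/4)Mh²`. -/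
theorem mixed_stencil_consistency (z : EuclideanSpace ℝ (Fin 2)) (h M : ℝ)
    (hh : 0 < h) (hM : 0 ≤ M) (u : EuclideanSpace ℝ (Fin 2) → ℝ)
    (s : Set (EuclideanSpace ℝ (Fin 2))) (hs : IsOpen s)
    (hball : closedBall z (2 * h) ⊆ s) (hu : ContDiffOn ℝ 4 u s)
    (hbound : ∀ x ∈ closedBall z (2 * h), ‖iteratedFDeriv ℝ 4 u x‖ ≤ M) :
    |(2 * u z - u (z + h • e1) + u (z + h • e1 + h • e2) - u (z + h • e2)
        - u (z - h • e1) + u (z - h • e1 - h • e2) - u (z - h • e2)) / (2 * h ^ 2)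
      - fderiv ℝ (fun x => fderiv ℝ u x e2) z e1|
    ≤ (1 / 4) * M * h ^ 2 := by
  set a : EuclideanSpace ℝ (Fin 2) := h • e1 with ha
  set b : EuclideanSpace ℝ (Fin 2) := h • e2 with hb
  have hzmem : z ∈ s := hball (mem_closedBall_self (by positivity))
  have hC4 : ContDiffAt ℝ 4 u z := hu.contDiffAt (hs.mem_nhds hzmem)
  -- rewrite the target derivative
  have hDf : DifferentiableAt ℝ (fderiv ℝ u) z :=
    (hC4.fderiv_right (m := 1) (by norm_num)).differentiableAt (by norm_num)
  have hDtarget : fderiv ℝ (fun x => fderiv ℝ u x e2) z e1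
      = fderiv ℝ (fderiv ℝ u) z e1 e2 := by
    have h1 := fderiv_clm_apply (c := fderiv ℝ u) (u := fun _ => e2) hDf
      (differentiableAt_const _)
    rw [show (fun x => fderiv ℝ u x e2) = (fun y => (fderiv ℝ u y) ((fun _ => e2) y))
      from rfl, h1]
    simp
  have hsymm : fderiv ℝ (fderiv ℝ u) z e2 e1 = fderiv ℝ (fderiv ℝ u) z e1 e2 :=
    (hC4.isSymmSndFDerivAt (by norm_num)).eq e2 e1
  -- norms
  have he1 : ‖e1‖ = 1 := by simp [e1]
  have he2 : ‖e2‖ = 1 := by simp [e2]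
  have hinner : (inner ℝ e1 e2 : ℝ) = 0 := by
    simp [e1, e2, EuclideanSpace.inner_single_left, EuclideanSpace.single_apply]
  have hee : ‖e1 + e2‖ ^ 2 = 2 := by
    rw [norm_add_sq_real, he1, he2, hinner]; norm_num
  have hna : ‖a‖ = h := by rw [ha, norm_smul, he1, Real.norm_eq_abs, abs_of_pos hh]; ring
  have hnb : ‖b‖ = h := by rw [hb, norm_smul, he2, Real.norm_eq_abs, abs_of_pos hh]; ring
  have hab2 : ‖a + b‖ ^ 2 = 2 * h ^ 2 := by
    rw [show a + b = h • (e1 + e2) by rw [ha, hb, smul_add], norm_smul, mul_pow,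
      hee, Real.norm_eq_abs, sq_abs]
    ring
  have hab_le : ‖a + b‖ ≤ 2 * h := by nlinarith [norm_nonneg (a + b), hab2, hh]
  have hab4 : ‖a + b‖ ^ 4 = 4 * h ^ 4 := by
    rw [show (4:ℕ) = 2 * 2 from rfl, pow_mul, hab2]; ring
  -- the six Taylor estimates
  have TB := fun (v : EuclideanSpace ℝ (Fin 2)) (hv : ‖v‖ ≤ 2 * h) =>
    taylor_four_bound hs hu hM hball hbound hv
  have hE1 := TB a (by rw [hna]; linarith)
  have hE3 := TB b (by rw [hnb]; linarith)
  have hE2 := TB (a + b) hab_le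
  have hE4 := TB (-a) (by rw [norm_neg, hna]; linarith)
  have hE6 := TB (-b) (by rw [norm_neg, hnb]; linarith)
  have hE5 := TB (-(a + b)) (by rw [norm_neg]; exact hab_le)
  rw [norm_neg, hna] at hE4
  rw [norm_neg, hnb] at hE6
  rw [norm_neg, hab4] at hE5
  rw [hna] at hE1
  rw [hnb] at hE3
  rw [hab4] at hE2
  rw [show z + -a = z - a by abel] at hE4
  rw [show z + -b = z - b by abel] at hE6
  rw [show z + -(a + b) = z - a - b by abel] at hE5
  rw [show z + (a + b) = z + a + b by rw [add_assoc]] at hE2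
  -- abbreviations
  set L : EuclideanSpace ℝ (Fin 2) →L[ℝ] ℝ := fderiv ℝ u z with hL
  set B := fderiv ℝ (fderiv ℝ u) z with hBdef
  set C := iteratedFDeriv ℝ 3 u z with hCdef
  -- multilinear expansions
  have hLadd : L (a + b) = L a + L b := map_add _ _ _
  have hLnega : L (-a) = -(L a) := map_neg _ _
  have hLnegb : L (-b) = -(L b) := map_neg _ _
  have hLnegab : L (-(a + b)) = -(L (a + b)) := map_neg _ _
  have hBadd : B (a + b) (a + b) = B a a + B a b + B b a + B b b := by
    rw [map_add]
    simp only [ContinuousLinearMap.add_apply, map_add]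
    ring
  have hBnega : B (-a) (-a) = B a a := by rw [map_neg]; simp
  have hBnegb : B (-b) (-b) = B b b := by rw [map_neg]; simp
  have hBnegab : B (-(a + b)) (-(a + b)) = B (a + b) (a + b) := by rw [map_neg]; simp
  have hBab : B a b = h ^ 2 * B e1 e2 := by
    rw [ha, hb, map_smul]
    simp only [ContinuousLinearMap.smul_apply, map_smul, smul_eq_mul]
    ring
  have hBba : B b a = h ^ 2 * B e1 e2 := by
    rw [ha, hb, map_smul]
    simp only [ContinuousLinearMap.smul_apply, map_smul, smul_eq_mul]
    rw [hsymm]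
    ring
  have hCneg : ∀ v : EuclideanSpace ℝ (Fin 2),
      C (fun _ => -v) = -(C (fun _ => v)) := by
    intro v
    have h3 : (fun _ : Fin 3 => -v) = fun _ : Fin 3 => (-1 : ℝ) • v := by
      funext i; simp
    rw [h3, ContinuousMultilinearMap.map_smul_univ]
    simp only [Finset.prod_const, smul_eq_mul]
    norm_num
  clear_value a b L B C
  have key : (2 * u z - u (z + a) + u (z + a + b) - u (z + b) - u (z - a)
        + u (z - a - b) - u (z - b)) / (2 * h ^ 2) - B e1 e2
      = ((u (z + a + b) - u z - L (a + b) - (1/2) * B (a + b) (a + b)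
            - (1/6) * C (fun _ => a + b))
         + (u (z - a - b) - u z - L (-(a + b)) - (1/2) * B (-(a + b)) (-(a + b))
            - (1/6) * C (fun _ => -(a + b)))
         - (u (z + a) - u z - L a - (1/2) * B a a - (1/6) * C (fun _ => a))
         - (u (z + b) - u z - L b - (1/2) * B b b - (1/6) * C (fun _ => b))
         - (u (z - a) - u z - L (-a) - (1/2) * B (-a) (-a) - (1/6) * C (fun _ => -a))
         - (u (z - b) - u z - L (-b) - (1/2) * B (-b) (-b) - (1/6) * C (fun _ => -b)))
        / (2 * h ^ 2) := by
    rw [hLnegab, hLadd, hLnega, hLnegb, hBnegab, hBadd, hBnega, hBnegb, hBab, hBba,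
      hCneg a, hCneg b, hCneg (a + b)]
    have h2h : (2 * h ^ 2 : ℝ) ≠ 0 := by positivity
    rw [eq_div_iff h2h, sub_mul, div_mul_cancel₀ _ h2h]
    ring
  rw [hDtarget, key, abs_div, abs_of_pos (show (0:ℝ) < 2 * h ^ 2 by positivity),
    div_le_iff₀ (by positivity : (0:ℝ) < 2 * h ^ 2)]
  have k1 := abs_le.1 hE1
  have k2 := abs_le.1 hE2
  have k3 := abs_le.1 hE3
  have k4 := abs_le.1 hE4
  have k5 := abs_le.1 hE5
  have k6 := abs_le.1 hE6
  rw [abs_le]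
  constructor
  · linarith [k1.1, k2.1, k3.1, k4.1, k5.1, k6.1, k1.2, k2.2, k3.2, k4.2, k5.2, k6.2]
  · linarith [k1.1, k2.1, k3.1, k4.1, k5.1, k6.1, k1.2, k2.2, k3.2, k4.2, k5.2, k6.2]
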